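/- Let X, T, Y be as in the doubly robust setup (finite covariate set, finite treatment set, positivity, conditional exchangeability), and let μ̂_t and p̂_t be arbitrary measurable functions with p̂_t(x) ∈ (0,1]. Define ψ̂_t(X,T,Y) = μ̂_t(X) + 1{T=t}(Y - μ̂_t(X))/p̂_t(X). If either μ̂_t = μ_t (almost surely) or p̂_t = p_t (almost surely), then E[ψ̂_t(X,T,Y)] = E[Y(t)]. -/

import Mathlib

open MeasureTheory ProbabilityTheory

lemma cond_mul_integral_aux {Ω : Type*} [MeasurableSpace Ω] (μ : Measure Ω) [IsFiniteMeasure μ]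
    {s : Set Ω} (h0 : μ s ≠ 0) (f : Ω → ℝ) :
    (μ s).toReal * ∫ ω, f ω ∂(μ[|s]) = ∫ ω in s, f ω ∂μ := by
  rw [ProbabilityTheory.cond, integral_smul_measure, smul_eq_mul, ENNReal.toReal_inv, ← mul_assoc,
    mul_inv_cancel₀ (ENNReal.toReal_ne_zero.mpr ⟨h0, measure_ne_top μ s⟩), one_mul]

lemma integrable_cond_aux {Ω : Type*} [MeasurableSpace Ω] (μ : Measure Ω)
    {s : Set Ω} (h0 : μ s ≠ 0) {f : Ω → ℝ} (hf : Integrable f μ) :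
    Integrable f (μ[|s]) := by
  rw [ProbabilityTheory.cond]
  exact (hf.restrict).smul_measure (ENNReal.inv_ne_top.mpr h0)

lemma integral_decomp_aux {Ω 𝒳 : Type*} [MeasurableSpace Ω] [Fintype 𝒳] [MeasurableSpace 𝒳]
    [MeasurableSingletonClass 𝒳] (μ : Measure Ω) [IsFiniteMeasure μ]
    (X : Ω → 𝒳) (hX : Measurable X) (f : Ω → ℝ) (hf : Integrable f μ) :
    ∫ ω, f ω ∂μ = ∑ x : 𝒳, ∫ ω in X ⁻¹' {x}, f ω ∂μ := by
  have hu : (⋃ x : 𝒳, X ⁻¹' {x}) = Set.univ := by ext ω; simp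
  have h := integral_iUnion (μ := μ) (f := f) (s := fun x : 𝒳 => X ⁻¹' {x})
    (fun x => hX (measurableSet_singleton x))
    (fun a b hab => Set.disjoint_left.mpr (by
      rintro ω h1 h2
      simp only [Set.mem_preimage, Set.mem_singleton_iff] at h1 h2
      exact hab (h1 ▸ h2 ▸ rfl)))
    (by rw [hu]; exact hf.integrableOn)
  rw [hu, setIntegral_univ, tsum_fintype] at h
  exact h

lemma key_aux {Ω 𝒯 : Type*} [MeasurableSpace Ω] [MeasurableSpace 𝒯] [MeasurableSingletonClass 𝒯]
    [Fintype 𝒯] [DecidableEq 𝒯]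
    (ν : Measure Ω) [IsProbabilityMeasure ν] (T : Ω → 𝒯) (hT : Measurable T) (t : 𝒯)
    (f : Ω → ℝ) (hf : Integrable f ν) (hind : IndepFun f T ν) :
    ∫ ω, f ω * (if T ω = t then (1:ℝ) else 0) ∂ν
      = (∫ ω, f ω ∂ν) * (ν (T ⁻¹' {t})).toReal := by
  set ι : 𝒯 → ℝ := fun s => if s = t then (1:ℝ) else 0 with hι
  have hιm : Measurable ι := measurable_of_finite ι
  have h1 : IndepFun f (fun ω => ι (T ω)) ν := hind.comp measurable_id hιm
  have hint2 : Integrable (fun ω => ι (T ω)) ν := by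
    refine Integrable.mono' (integrable_const (1:ℝ))
      ((hιm.comp hT).aestronglyMeasurable) (Filter.Eventually.of_forall fun ω => ?_)
    simp only [hι]
    split <;> simp
  have h2 : integral ν (f * fun ω => ι (T ω)) = integral ν f * integral ν (fun ω => ι (T ω)) :=
    h1.integral_mul_eq_mul_integral hf.aestronglyMeasurable hint2.aestronglyMeasurable
  have h3 : (fun ω => ι (T ω)) = (T ⁻¹' {t}).indicator (fun _ => (1:ℝ)) := by
    funext ω
    by_cases h : T ω = t <;> simp [hι, Set.indicator_apply, h]
  calc ∫ ω, f ω * (if T ω = t then (1:ℝ) else 0) ∂ν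
      = integral ν (f * fun ω => ι (T ω)) := rfl
    _ = integral ν f * integral ν (fun ω => ι (T ω)) := h2
    _ = (∫ ω, f ω ∂ν) * (ν (T ⁻¹' {t})).toReal := by
        rw [h3, integral_indicator_const (1:ℝ) (hT (measurableSet_singleton t))]
        simp [Measure.real]

/-- Double robustness: the augmented IPW estimator is unbiased for the mean potential
outcome if either the outcome regression or the propensity model is correct. -/
theorem stmt8 {Ω 𝒳 𝒯 : Type*} [MeasurableSpace Ω]
    [Fintype 𝒳] [MeasurableSpace 𝒳] [MeasurableSingletonClass 𝒳]
    [Fintype 𝒯] [DecidableEq 𝒯] [MeasurableSpace 𝒯] [MeasurableSingletonClass 𝒯]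
    (μ : Measure Ω) [IsProbabilityMeasure μ]
    (X : Ω → 𝒳) (T : Ω → 𝒯) (Y : 𝒯 → Ω → ℝ)
    (hX : Measurable X) (hT : Measurable T) (hY : ∀ t, Measurable (Y t))
    (hYint : ∀ t, Integrable (Y t) μ)
    (p : 𝒯 → 𝒳 → ℝ)
    (hp : ∀ t x, p t x = ((μ[|X ⁻¹' {x}]) (T ⁻¹' {t})).toReal)
    (hpos : ∀ t x, 0 < p t x)
    (hexch : ∀ t x, IndepFun (Y t) T (μ[|X ⁻¹' {x}]))
    (t : 𝒯)
    (μt : 𝒳 → ℝ)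
    (hμt : ∀ x, μt x = ∫ ω, Y (T ω) ω ∂(μ[|X ⁻¹' {x} ∩ T ⁻¹' {t}]))
    (μhat phat : 𝒳 → ℝ)
    (hphat : ∀ x, phat x ∈ Set.Ioc (0 : ℝ) 1)
    (hcorrect : (∀ x, μhat x = μt x) ∨ (∀ x, phat x = p t x))
    (ψhat : Ω → ℝ)
    (hψhat : ∀ ω, ψhat ω = μhat (X ω) +
        (if T ω = t then (1 : ℝ) else 0) * (Y (T ω) ω - μhat (X ω)) / phat (X ω)) :
    ∫ ω, ψhat ω ∂μ = ∫ ω, Y t ω ∂μ := by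
  classical
  have hAm : ∀ x : 𝒳, MeasurableSet (X ⁻¹' {x}) := fun x => hX (measurableSet_singleton x)
  have hBm : MeasurableSet (T ⁻¹' {t}) := hT (measurableSet_singleton t)
  have hA0 : ∀ x, μ (X ⁻¹' {x}) ≠ 0 := by
    intro x h
    simpa [hp t x, cond_eq_zero_of_meas_eq_zero h] using hpos t x
  have hprob : ∀ x, IsProbabilityMeasure (μ[|X ⁻¹' {x}]) :=
    fun x => cond_isProbabilityMeasure (hA0 x)
  set m : 𝒳 → ℝ := fun x => ∫ ω, Y t ω ∂(μ[|X ⁻¹' {x}]) with hm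
  have hYcond : ∀ x, Integrable (Y t) (μ[|X ⁻¹' {x}]) :=
    fun x => integrable_cond_aux μ (hA0 x) (hYint t)
  -- key independence computation
  have hkey : ∀ (x : 𝒳) (c : ℝ),
      ∫ ω, (Y t ω - c) * (if T ω = t then (1:ℝ) else 0) ∂(μ[|X ⁻¹' {x}])
        = (m x - c) * p t x := by
    intro x c
    haveI := hprob x
    have hf : Integrable (fun ω => Y t ω - c) (μ[|X ⁻¹' {x}]) :=
      (hYcond x).sub (integrable_const c)
    have hind : IndepFun (fun ω => Y t ω - c) T (μ[|X ⁻¹' {x}]) :=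
      (hexch t x).comp (measurable_id.sub measurable_const) measurable_id
    rw [key_aux (μ[|X ⁻¹' {x}]) T hT t _ hf hind, hp t x]
    congr 1
    rw [integral_sub (hYcond x) (integrable_const c), integral_const]
    simp [hm]
  -- μt x = m x
  have hμtm : ∀ x, μt x = m x := by
    intro x
    haveI := hprob x
    have hνB : (μ[|X ⁻¹' {x}]) (T ⁻¹' {t}) ≠ 0 := by
      intro h
      simpa [hp t x, h] using hpos t x
    have hcc : μ[|X ⁻¹' {x} ∩ T ⁻¹' {t}] = (μ[|X ⁻¹' {x}])[|T ⁻¹' {t}] :=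
      (cond_cond_eq_cond_inter (hAm x) hBm μ).symm
    have hκc : ((μ[|X ⁻¹' {x}])[|T ⁻¹' {t}]) ((T ⁻¹' {t})ᶜ) = 0 := by
      rw [cond_apply hBm]
      simp
    have hae : ∀ᵐ ω ∂((μ[|X ⁻¹' {x}])[|T ⁻¹' {t}]), Y (T ω) ω = Y t ω := by
      have hmem := mem_ae_iff.mpr hκc
      filter_upwards [hmem] with ω hω
      simp only [Set.mem_preimage, Set.mem_singleton_iff] at hω
      rw [hω]
    have h2 : ∫ ω in T ⁻¹' {t}, Y t ω ∂(μ[|X ⁻¹' {x}]) = m x * p t x := by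
      rw [← integral_indicator hBm]
      have hk := hkey x 0
      simp only [sub_zero] at hk
      rw [← hk]
      congr 1
      funext ω
      by_cases h : T ω = t <;> simp [Set.indicator_apply, h]
    have h1 := cond_mul_integral_aux (μ[|X ⁻¹' {x}]) hνB (Y t)
    rw [h2, hp t x] at h1
    have hμtx : μt x = ∫ ω, Y t ω ∂((μ[|X ⁻¹' {x}])[|T ⁻¹' {t}]) := by
      rw [hμt x, hcc]
      exact integral_congr_ae hae
    have hpne : ((μ[|X ⁻¹' {x}]) (T ⁻¹' {t})).toReal ≠ 0 := by
      rw [← hp t x]; exact (hpos t x).ne'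
    rw [hμtx]
    exact mul_left_cancel₀ hpne (h1.trans (mul_comm (m x) _))
  -- nicer form of ψhat
  have hψeq : ψhat = fun ω =>
      μhat (X ω) + (Y t ω - μhat (X ω)) * (if T ω = t then (1:ℝ) else 0) / phat (X ω) := by
    funext ω
    rw [hψhat ω]
    by_cases h : T ω = t <;> simp [h]
  -- per-x integral of ψhat
  have hψx : ∀ x, ∫ ω, ψhat ω ∂(μ[|X ⁻¹' {x}]) = m x := by
    intro x
    haveI := hprob x
    have haeX : ∀ᵐ ω ∂(μ[|X ⁻¹' {x}]), X ω = x := by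
      have hc : (μ[|X ⁻¹' {x}]) ((X ⁻¹' {x})ᶜ) = 0 := by
        rw [cond_apply (hAm x)]
        simp
      filter_upwards [mem_ae_iff.mpr hc] with ω hω
      simpa using hω
    have hcong : ∫ ω, ψhat ω ∂(μ[|X ⁻¹' {x}]) =
        ∫ ω, (μhat x + (Y t ω - μhat x) * (if T ω = t then (1:ℝ) else 0) / phat x)
          ∂(μ[|X ⁻¹' {x}]) := by
      apply integral_congr_ae
      filter_upwards [haeX] with ω hω
      rw [hψeq]
      simp only [hω]
    have hintmul : Integrable
        (fun ω => (Y t ω - μhat x) * (if T ω = t then (1:ℝ) else 0)) (μ[|X ⁻¹' {x}]) := by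
      refine Integrable.mono' (((hYcond x).sub (integrable_const (μhat x))).norm)
        ?_ (Filter.Eventually.of_forall fun ω => ?_)
      · exact (((hY t).sub measurable_const).mul
          ((measurable_of_finite (fun s : 𝒯 => if s = t then (1:ℝ) else 0)).comp hT)).aestronglyMeasurable
      · by_cases h : T ω = t <;> simp [h, abs_nonneg]
    have hsplit : ∫ ω, (μhat x + (Y t ω - μhat x) * (if T ω = t then (1:ℝ) else 0) / phat x)
          ∂(μ[|X ⁻¹' {x}])
        = μhat x + (m x - μhat x) * p t x / phat x := by
      rw [integral_add (integrable_const _) (by simpa [div_eq_mul_inv] using hintmul.mul_const (phat x)⁻¹),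
        integral_const, integral_div, hkey x (μhat x)]
      simp
    rw [hcong, hsplit]
    rcases hcorrect with h | h
    · rw [h x, hμtm x]
      simp
    · rw [h x, mul_div_assoc, div_self (hpos t x).ne', mul_one]
      ring
  -- assemble
  have hψint : Integrable ψhat μ := by
    rw [hψeq]
    obtain ⟨C1, hC1⟩ := Finite.exists_le fun x : 𝒳 => ‖μhat x‖
    obtain ⟨C2, hC2⟩ := Finite.exists_le fun x : 𝒳 => (phat x)⁻¹
    have hμX : Integrable (fun ω => μhat (X ω)) μ := by
      refine Integrable.mono' (integrable_const C1)
        (((measurable_of_finite μhat).comp hX).aestronglyMeasurable)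
        (Filter.Eventually.of_forall fun ω => hC1 (X ω))
    refine Integrable.add hμX ?_
    refine Integrable.mono' ((((hYint t).sub hμX).norm).const_mul C2)
      ?_ (Filter.Eventually.of_forall fun ω => ?_)
    · exact ((((hY t).sub ((measurable_of_finite μhat).comp hX)).mul
        ((measurable_of_finite (fun s : 𝒯 => if s = t then (1:ℝ) else 0)).comp hT)).div
        ((measurable_of_finite phat).comp hX)).aestronglyMeasurable
    · have hinv : (0:ℝ) < (phat (X ω))⁻¹ := inv_pos.mpr (hphat (X ω)).1
      have hCle : (phat (X ω))⁻¹ ≤ C2 := hC2 (X ω)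
      rw [norm_div, norm_mul, Real.norm_eq_abs (phat (X ω))]
      rw [abs_of_pos (hphat (X ω)).1, div_eq_mul_inv]
      have hι : ‖if T ω = t then (1:ℝ) else 0‖ ≤ 1 := by split <;> simp
      have h0 : (0:ℝ) ≤ ‖Y t ω - μhat (X ω)‖ := norm_nonneg _
      calc ‖Y t ω - μhat (X ω)‖ * ‖if T ω = t then (1:ℝ) else 0‖ * (phat (X ω))⁻¹
          ≤ ‖Y t ω - μhat (X ω)‖ * 1 * C2 := by
            apply mul_le_mul (by nlinarith [norm_nonneg (if T ω = t then (1:ℝ) else 0)]) hCle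
              (le_of_lt hinv) (by nlinarith)
        _ = C2 * ‖(fun ω => Y t ω - μhat (X ω)) ω‖ := by ring
  calc ∫ ω, ψhat ω ∂μ
      = ∑ x : 𝒳, ∫ ω in X ⁻¹' {x}, ψhat ω ∂μ := integral_decomp_aux μ X hX ψhat hψint
    _ = ∑ x : 𝒳, (μ (X ⁻¹' {x})).toReal * ∫ ω, ψhat ω ∂(μ[|X ⁻¹' {x}]) := by
        refine Finset.sum_congr rfl fun x _ => (cond_mul_integral_aux μ (hA0 x) ψhat).symm
    _ = ∑ x : 𝒳, (μ (X ⁻¹' {x})).toReal * ∫ ω, Y t ω ∂(μ[|X ⁻¹' {x}]) := by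
        refine Finset.sum_congr rfl fun x _ => ?_
        rw [hψx x, hm]
    _ = ∑ x : 𝒳, ∫ ω in X ⁻¹' {x}, Y t ω ∂μ := by
        refine Finset.sum_congr rfl fun x _ => cond_mul_integral_aux μ (hA0 x) (Y t)
    _ = ∫ ω, Y t ω ∂μ := (integral_decomp_aux μ X hX (Y t) (hYint t)).symm
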